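/- arXiv:1809.06008 — 3 statements merged into one kernel-verified Lean document; each statement's English description precedes it below -/
import Mathlib

section
/- The negative entropy function d(x) = ∑_{i=1}^m x(i) log x(i) - x(i) is 1-strongly convex with respect to the ℓ₁-norm on the probability simplex Δ_m = {x ∈ ℝ^m : x ≥ 0, ∑_i x(i) = 1}, i.e., for all x, y in the relative interior of Δ_m, d(y) ≥ d(x) + ⟨∇d(x), y - x⟩ + (1/2)‖y - x‖₁². -/
open Real Set


noncomputable def gAux : ℝ → ℝ := fun s => 4*s*Real.log s + 4*Real.log s - 8*s + 8
noncomputable def hAux : ℝ → ℝ := fun s => (2*s+4)*(s*Real.log s + 1 - s) - 3*(s-1)^2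

lemma mulLog_deriv {t : ℝ} (ht : 0 < t) :
    HasDerivAt (fun s : ℝ => s * Real.log s) (Real.log t + 1) t := by
  have := (hasDerivAt_id' t).mul (Real.hasDerivAt_log ht.ne')
  simp [mul_inv_cancel₀ ht.ne'] at this; exact this

lemma gAux_deriv {t : ℝ} (ht : 0 < t) :
    HasDerivAt gAux (4*Real.log t + 4/t - 4) t := by
  have h2 : HasDerivAt Real.log (1/t) t := by
    simpa [one_div] using Real.hasDerivAt_log ht.ne'
  have H := ((((mulLog_deriv ht).const_mul (4:ℝ)).add (h2.const_mul (4:ℝ))).sub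
      ((hasDerivAt_id t).const_mul (8:ℝ))).add_const (8:ℝ)
  convert H using 1
  · rfl
  · rfl
  · ext s; simp [gAux]; ring
  · field_simp; ring

lemma hAux_deriv {t : ℝ} (ht : 0 < t) : HasDerivAt hAux (gAux t) t := by
  have h1 : HasDerivAt (fun s : ℝ => s * Real.log s + 1 - s) (Real.log t) t := by
    have := ((mulLog_deriv ht).add_const 1).sub (hasDerivAt_id t)
    exact this.congr_deriv (by simp)
  have h2 : HasDerivAt (fun s : ℝ => 2*s+4) (2:ℝ) t := by
    simpa using ((hasDerivAt_id t).const_mul (2:ℝ)).add_const (4:ℝ)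
  have h3 : HasDerivAt (fun s : ℝ => 3*(s-1)^2) (3*(2*(t-1))) t := by
    have := (((hasDerivAt_id t).sub_const 1).pow 2).const_mul (3:ℝ)
    exact this.congr_deriv (by push_cast; simp)
  have H := (h2.mul h1).sub h3
  exact H.congr_deriv (by simp only [gAux]; ring)

-- g is nonneg-derivative hence monotone on Ioi 0
lemma gAux_mono : MonotoneOn gAux (Ioi (0:ℝ)) := by
  have hc : ContinuousOn gAux (Ioi (0:ℝ)) := fun t ht => ((gAux_deriv ht).continuousAt).continuousWithinAt
  refine monotoneOn_of_deriv_nonneg (convex_Ioi 0) hc ?_ ?_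
  · intro t ht
    rw [interior_Ioi] at ht
    exact (gAux_deriv ht).differentiableAt.differentiableWithinAt
  intro t ht
  rw [interior_Ioi] at ht
  rw [(gAux_deriv ht).deriv]
  have := Real.one_sub_inv_le_log_of_pos ht
  have h4 : 4 * (1 - t⁻¹) ≤ 4 * Real.log t := by linarith
  rw [div_eq_mul_inv]
  linarith

lemma gAux_one : gAux 1 = 0 := by simp [gAux]
lemma hAux_one : hAux 1 = 0 := by simp [hAux]

lemma hAux_nonneg {t : ℝ} (ht : 0 < t) : 0 ≤ hAux t := by
  have hc : ∀ s ∈ Ioi (0:ℝ), ContinuousWithinAt hAux (Ioi 0) s :=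
    fun s hs => ((hAux_deriv hs).continuousAt).continuousWithinAt
  rcases le_or_gt 1 t with h1 | h1
  · -- monotone on Icc 1 t
    have hmono : MonotoneOn hAux (Icc (1:ℝ) t) := by
      refine monotoneOn_of_deriv_nonneg (convex_Icc 1 t) ?_ ?_ ?_
      · exact fun s hs => (hc s (lt_of_lt_of_le one_pos hs.1)).mono
          (fun u hu => lt_of_lt_of_le one_pos hu.1)
      · intro s hs
        rw [interior_Icc] at hs
        exact (hAux_deriv (lt_trans one_pos hs.1)).differentiableAt.differentiableWithinAt
      · intro s hs
        rw [interior_Icc] at hs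
        have hs0 : (0:ℝ) < s := lt_trans one_pos hs.1
        rw [(hAux_deriv hs0).deriv]
        have := gAux_mono (mem_Ioi.2 one_pos) (mem_Ioi.2 hs0) hs.1.le
        rw [gAux_one] at this; exact this
    have := hmono (left_mem_Icc.2 h1) (right_mem_Icc.2 h1) h1
    rw [hAux_one] at this; exact this
  · -- antitone on Icc t 1
    have hanti : AntitoneOn hAux (Icc t (1:ℝ)) := by
      refine antitoneOn_of_deriv_nonpos (convex_Icc t 1) ?_ ?_ ?_
      · exact fun s hs => (hc s (lt_of_lt_of_le ht hs.1)).mono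
          (fun u hu => lt_of_lt_of_le ht hu.1)
      · intro s hs
        rw [interior_Icc] at hs
        exact (hAux_deriv (lt_trans ht hs.1)).differentiableAt.differentiableWithinAt
      · intro s hs
        rw [interior_Icc] at hs
        have hs0 : (0:ℝ) < s := lt_trans ht hs.1
        rw [(hAux_deriv hs0).deriv]
        have := gAux_mono (mem_Ioi.2 hs0) (mem_Ioi.2 one_pos) hs.2.le
        rw [gAux_one] at this; exact this
    have := hanti (left_mem_Icc.2 h1.le) (right_mem_Icc.2 h1.le) h1.le
    rw [hAux_one] at this; exact this

-- pointwise Pinsker lemma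
lemma pinsker_pointwise {p q : ℝ} (hp : 0 < p) (hq : 0 < q) :
    3 * (p - q)^2 ≤ (2*p + 4*q) * (p * (Real.log p - Real.log q) + q - p) := by
  have ht : 0 < p / q := div_pos hp hq
  have h := hAux_nonneg ht
  have key : hAux (p/q) * q^2 = (2*p + 4*q) * (p * (Real.log p - Real.log q) + q - p) - 3*(p-q)^2 := by
    have hl : Real.log (p/q) = Real.log p - Real.log q := Real.log_div hp.ne' hq.ne'
    simp only [hAux, hl]
    field_simp
  nlinarith [sq_nonneg q, mul_nonneg h (sq_nonneg q)]


/-- the negative entropy `d(x) = ∑ᵢ (x i * log (x i) - x i)` is 1-strongly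
convex w.r.t. the ℓ₁-norm on the relative interior of the probability simplex:
for `x, y` with strictly positive entries summing to one,
`d(y) ≥ d(x) + ⟨∇d(x), y - x⟩ + ½‖y - x‖₁²` where `∇d(x) i = log (x i)`. -/
theorem entropy_strongly_convex_l1 (m : ℕ) (x y : Fin m → ℝ)
    (hx : ∀ i, 0 < x i) (hxs : ∑ i, x i = 1)
    (hy : ∀ i, 0 < y i) (hys : ∑ i, y i = 1) :
    (∑ i, (y i * Real.log (y i) - y i)) ≥
      (∑ i, (x i * Real.log (x i) - x i)) + (∑ i, Real.log (x i) * (y i - x i)) +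
        (1 / 2 : ℝ) * (∑ i, |y i - x i|) ^ 2 := by
  set w : Fin m → ℝ := fun i => (2 * y i + 4 * x i) / 3 with hw
  set k : Fin m → ℝ := fun i => y i * (Real.log (y i) - Real.log (x i)) + x i - y i with hk
  have hwpos : ∀ i ∈ Finset.univ, 0 < w i := fun i _ => by
    have := hx i; have := hy i; simp only [hw]; positivity
  have hws : ∑ i, w i = 2 := by
    have h6 : ∑ i, (2 * y i + 4 * x i) = 6 := by
      rw [Finset.sum_add_distrib, ← Finset.mul_sum, ← Finset.mul_sum, hxs, hys]; norm_num
    simp only [hw, ← Finset.sum_div, h6]; norm_num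
  have hCS : (∑ i, |y i - x i|) ^ 2 / (∑ i, w i) ≤ ∑ i, |y i - x i| ^ 2 / w i :=
    Finset.sq_sum_div_le_sum_sq_div Finset.univ _ hwpos
  have hpw : ∀ i, |y i - x i| ^ 2 / w i ≤ k i := by
    intro i
    have hp := pinsker_pointwise (hy i) (hx i)
    rw [sq_abs, div_le_iff₀ (hwpos i (Finset.mem_univ i))]
    have hki : k i = y i * (Real.log (y i) - Real.log (x i)) + x i - y i := rfl
    simp only [hw]
    rw [div_eq_mul_inv]
    nlinarith [hp]
  have hsum : ∑ i, |y i - x i| ^ 2 / w i ≤ ∑ i, k i :=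
    Finset.sum_le_sum fun i _ => hpw i
  rw [hws] at hCS
  have hTV : (1 / 2 : ℝ) * (∑ i, |y i - x i|) ^ 2 ≤ ∑ i, k i := by
    calc (1 / 2 : ℝ) * (∑ i, |y i - x i|) ^ 2 = (∑ i, |y i - x i|) ^ 2 / 2 := by ring
    _ ≤ ∑ i, |y i - x i| ^ 2 / w i := hCS
    _ ≤ ∑ i, k i := hsum
  have hid : ∑ i, k i = (∑ i, (y i * Real.log (y i) - y i)) -
      (∑ i, (x i * Real.log (x i) - x i)) - (∑ i, Real.log (x i) * (y i - x i)) := by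
    rw [← Finset.sum_sub_distrib, ← Finset.sum_sub_distrib]
    exact Finset.sum_congr rfl fun i _ => by simp only [hk]; ring
  linarith [hTV, hid.ge, hid.le]
end

section
/- Dual averaging regret bound: Let X be closed convex with 0 ∈ X, d : X → ℝ satisfy d ≥ 0, d(0) = 0, and 1-strong convexity w.r.t. ‖·‖. Let {γ_t}_{t≥0} be a non-decreasing sequence of positive reals with γ_{-1} := γ_0, let g_0, g_1, ... ∈ ℝ^m, and define ŷ_0 = 0 and ŷ_{t+1} = argmin_{x ∈ X} {⟨∑_{k=0}^t g_k, x⟩ + γ_t d(x)}. Then for every x ∈ X and t ≥ 0: ∑_{k=0}^t ⟨g_k, ŷ_k − x⟩ ≤ (1/2)∑_{k=0}^t (1/γ_{k−1})‖g_k‖_*² + γ_t d(x). -/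
/-- The dual norm of a vector `w` with respect to a norm `N` on `ℝ^m`. -/
noncomputable def dualNorm (m : ℕ) (N : (Fin m → ℝ) → ℝ) (w : Fin m → ℝ) : ℝ :=
  sSup {r : ℝ | ∃ u : Fin m → ℝ, N u ≤ 1 ∧ r = ∑ i, w i * u i}

section helpers
variable {m : ℕ} {N : (Fin m → ℝ) → ℝ}

lemma myN_zero (hN3 : ∀ (a : ℝ) (v), N (a • v) = |a| * N v) : N 0 = 0 := by
  have h := hN3 0 0
  simpa using h

lemma myN_neg (hN3 : ∀ (a : ℝ) (v), N (a • v) = |a| * N v) (v : Fin m → ℝ) :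
    N (-v) = N v := by
  have h := hN3 (-1) v
  simpa using h

lemma myN_sum_le (hN2 : ∀ u v, N (u + v) ≤ N u + N v)
    (hN3 : ∀ (a : ℝ) (v), N (a • v) = |a| * N v)
    (s : Finset (Fin m)) (f : Fin m → (Fin m → ℝ)) :
    N (∑ i ∈ s, f i) ≤ ∑ i ∈ s, N (f i) := by
  classical
  induction s using Finset.induction with
  | empty => simp [myN_zero hN3]
  | @insert a s' ha ih =>
      rw [Finset.sum_insert ha, Finset.sum_insert ha]
      exact (hN2 _ _).trans (by linarith)

lemma myN_lip (hN2 : ∀ u v, N (u + v) ≤ N u + N v)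
    (hN3 : ∀ (a : ℝ) (v), N (a • v) = |a| * N v) (u v : Fin m → ℝ) :
    |N u - N v| ≤ N (u - v) := by
  have h1 : N u ≤ N v + N (u - v) := by
    have := hN2 v (u - v); simpa using this
  have h2 : N v ≤ N u + N (u - v) := by
    have := hN2 u (v - u)
    have e : N (v - u) = N (u - v) := by
      rw [show v - u = -(u - v) by ring, myN_neg hN3]
    simpa [e] using this
  rw [abs_le]; constructor <;> linarith

lemma myN_le (hN1 : ∀ v, 0 ≤ N v) (hN2 : ∀ u v, N (u + v) ≤ N u + N v)
    (hN3 : ∀ (a : ℝ) (v), N (a • v) = |a| * N v) (u : Fin m → ℝ) :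
    N u ≤ (∑ i, N (Pi.single i 1)) * ‖u‖ := by
  classical
  set e : Fin m → (Fin m → ℝ) := fun i => Pi.single i 1 with he
  have hrep : u = ∑ i, u i • e i := by
    funext j
    simp [he, Pi.single_apply, Finset.sum_apply, mul_comm]
  have h1 : N u ≤ ∑ i, N (u i • e i) := by
    conv_lhs => rw [hrep]
    exact myN_sum_le hN2 hN3 _ _
  have h2 : ∑ i, N (u i • e i) ≤ ∑ i, ‖u‖ * N (e i) := by
    apply Finset.sum_le_sum
    intro i _
    rw [hN3]
    exact mul_le_mul_of_nonneg_right (by simpa using norm_le_pi_norm u i) (hN1 _)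
  have h3 : ∑ i, ‖u‖ * N (e i) = (∑ i, N (e i)) * ‖u‖ := by
    rw [← Finset.mul_sum, mul_comm]
  linarith

lemma myN_cont (hN1 : ∀ v, 0 ≤ N v) (hN2 : ∀ u v, N (u + v) ≤ N u + N v)
    (hN3 : ∀ (a : ℝ) (v), N (a • v) = |a| * N v) : Continuous N := by
  set L : ℝ := ∑ i, N (Pi.single i 1) with hL
  have hL0 : 0 ≤ L := Finset.sum_nonneg fun i _ => hN1 _
  have : LipschitzWith L.toNNReal N := by
    apply LipschitzWith.of_dist_le_mul
    intro u v
    rw [Real.dist_eq]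
    calc |N u - N v| ≤ N (u - v) := myN_lip hN2 hN3 u v
      _ ≤ L * ‖u - v‖ := myN_le hN1 hN2 hN3 _
      _ = L.toNNReal * dist u v := by rw [Real.coe_toNNReal L hL0, dist_eq_norm]
  exact this.continuous

lemma myN_lb (hN1 : ∀ v, 0 ≤ N v) (hN2 : ∀ u v, N (u + v) ≤ N u + N v)
    (hN3 : ∀ (a : ℝ) (v), N (a • v) = |a| * N v)
    (hN4 : ∀ v, N v = 0 → v = 0) :
    ∃ c > 0, ∀ u, c * ‖u‖ ≤ N u := by
  rcases Nat.eq_zero_or_pos m with hm | hm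
  · refine ⟨1, one_pos, fun u => ?_⟩
    subst hm
    have h0 : u = 0 := funext fun i => i.elim0
    rw [h0, norm_zero, mul_zero, myN_zero hN3]
  · have : Nontrivial (Fin m → ℝ) := by
      haveI : NeZero m := ⟨hm.ne'⟩
      infer_instance
    obtain ⟨u₀', hu₀'⟩ := exists_norm_eq (Fin m → ℝ) (zero_le_one)
    have hsne : (Metric.sphere (0 : Fin m → ℝ) 1).Nonempty :=
      ⟨u₀', by simpa [mem_sphere_zero_iff_norm] using hu₀'⟩
    obtain ⟨u₀, hu₀mem, hmin⟩ := (isCompact_sphere (0 : Fin m → ℝ) 1).exists_isMinOn hsne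
      (myN_cont hN1 hN2 hN3).continuousOn
    have hu₀norm : ‖u₀‖ = 1 := by simpa [mem_sphere_zero_iff_norm] using hu₀mem
    have hu₀ne : u₀ ≠ 0 := by intro h; rw [h] at hu₀norm; simp at hu₀norm
    have hc : 0 < N u₀ := lt_of_le_of_ne (hN1 _) (fun h => hu₀ne (hN4 _ h.symm))
    refine ⟨N u₀, hc, fun u => ?_⟩
    rcases eq_or_ne u 0 with rfl | hu
    · simp [myN_zero hN3]
    · have hr : 0 < ‖u‖ := norm_pos_iff.2 hu
      have hw : ‖u‖⁻¹ • u ∈ Metric.sphere (0 : Fin m → ℝ) 1 := by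
        simp [mem_sphere_zero_iff_norm, norm_smul, abs_of_pos (inv_pos.2 hr),
          inv_mul_cancel₀ hr.ne']
      have := hmin hw
      have heq : N u = ‖u‖ * N (‖u‖⁻¹ • u) := by
        rw [hN3, abs_of_pos (inv_pos.2 hr)]
        field_simp
      rw [heq]
      calc N u₀ * ‖u‖ = ‖u‖ * N u₀ := by ring
        _ ≤ ‖u‖ * N (‖u‖⁻¹ • u) := mul_le_mul_of_nonneg_left this hr.le

end helpers

section dual
variable {m : ℕ} {N : (Fin m → ℝ) → ℝ}

lemma dual_bddAbove (hN1 : ∀ v, 0 ≤ N v) (hN2 : ∀ u v, N (u + v) ≤ N u + N v)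
    (hN3 : ∀ (a : ℝ) (v), N (a • v) = |a| * N v)
    (hN4 : ∀ v, N v = 0 → v = 0) (w : Fin m → ℝ) :
    BddAbove {r : ℝ | ∃ u : Fin m → ℝ, N u ≤ 1 ∧ r = ∑ i, w i * u i} := by
  obtain ⟨c, hc, hcb⟩ := myN_lb hN1 hN2 hN3 hN4
  refine ⟨(∑ i, |w i|) * c⁻¹, ?_⟩
  rintro r ⟨u, hu, rfl⟩
  have hun : ‖u‖ ≤ c⁻¹ := by
    rw [← one_div]
    rw [le_div_iff₀ hc, mul_comm]
    exact (hcb u).trans hu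
  calc ∑ i, w i * u i ≤ ∑ i, |w i| * c⁻¹ := by
        apply Finset.sum_le_sum
        intro i _
        calc w i * u i ≤ |w i * u i| := le_abs_self _
          _ = |w i| * |u i| := abs_mul _ _
          _ ≤ |w i| * c⁻¹ := by
              have hui : |u i| ≤ ‖u‖ := by simpa using norm_le_pi_norm u i
              exact mul_le_mul_of_nonneg_left (hui.trans hun) (abs_nonneg _)
    _ = (∑ i, |w i|) * c⁻¹ := by rw [← Finset.sum_mul]

lemma dual_bound (hN1 : ∀ v, 0 ≤ N v) (hN2 : ∀ u v, N (u + v) ≤ N u + N v)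
    (hN3 : ∀ (a : ℝ) (v), N (a • v) = |a| * N v)
    (hN4 : ∀ v, N v = 0 → v = 0) (w v : Fin m → ℝ) :
    ∑ i, w i * v i ≤ dualNorm m N w * N v := by
  have hbdd := dual_bddAbove hN1 hN2 hN3 hN4 w
  rcases eq_or_ne v 0 with rfl | hv
  · simp [myN_zero hN3]
  · have hNv : 0 < N v := lt_of_le_of_ne (hN1 _) (fun h => hv (hN4 _ h.symm))
    set u : Fin m → ℝ := (N v)⁻¹ • v with hu
    have hNu : N u = 1 := by
      rw [hu, hN3, abs_of_pos (inv_pos.2 hNv), inv_mul_cancel₀ hNv.ne']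
    have hmem : (∑ i, w i * u i) ∈
        {r : ℝ | ∃ u : Fin m → ℝ, N u ≤ 1 ∧ r = ∑ i, w i * u i} :=
      ⟨u, le_of_eq hNu, rfl⟩
    have hle : ∑ i, w i * u i ≤ dualNorm m N w := le_csSup hbdd hmem
    have heq : ∑ i, w i * u i = (N v)⁻¹ * ∑ i, w i * v i := by
      rw [Finset.mul_sum]
      apply Finset.sum_congr rfl
      intro i _
      simp [hu]
      ring
    rw [heq] at hle
    calc ∑ i, w i * v i = N v * ((N v)⁻¹ * ∑ i, w i * v i) := by field_simp
      _ ≤ N v * dualNorm m N w := mul_le_mul_of_nonneg_left hle hNv.le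
      _ = dualNorm m N w * N v := mul_comm _ _

end dual

section star
variable {m : ℕ}

lemma strong_opt (X : Set (Fin m → ℝ)) (hXconv : Convex ℝ X)
    (N : (Fin m → ℝ) → ℝ)
    (hN3 : ∀ (a : ℝ) (v), N (a • v) = |a| * N v)
    (d : (Fin m → ℝ) → ℝ) (Dd : (Fin m → ℝ) → (Fin m → ℝ))
    (hdsc : ∀ x ∈ X, ∀ y ∈ X,
      d y ≥ d x + (∑ i, Dd x i * (y i - x i)) + (1 / 2 : ℝ) * (N (y - x)) ^ 2)
    (s : Fin m → ℝ) (γ : ℝ) (hγ : 0 < γ)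
    (y : Fin m → ℝ) (hy : y ∈ X)
    (hmin : ∀ x ∈ X, (∑ i, s i * y i) + γ * d y ≤ (∑ i, s i * x i) + γ * d x)
    (x : Fin m → ℝ) (hx : x ∈ X) :
    (∑ i, s i * y i) + γ * d y + (γ / 2) * (N (x - y)) ^ 2
      ≤ (∑ i, s i * x i) + γ * d x := by
  set n : ℝ := N (x - y) with hn
  set c : ℝ := (γ / 2) * n ^ 2 with hc
  have hc0 : 0 ≤ c := mul_nonneg (by linarith) (sq_nonneg _)
  have key : ∀ l : ℝ, 0 < l → l ≤ 1 →
      (∑ i, s i * y i) + γ * d y + c ≤ (∑ i, s i * x i) + γ * d x + l * c := by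
    intro l hl0 hl1
    set z : Fin m → ℝ := y + l • (x - y) with hz
    have hzX : z ∈ X := by
      have hcomb := hXconv hy hx (by linarith : (0:ℝ) ≤ 1 - l) hl0.le (by ring)
      have : z = (1 - l) • y + l • x := by
        funext i; simp [hz]; ring
      rw [this]; exact hcomb
    have h1 := hdsc z hzX y hy
    have h2 := hdsc z hzX x hx
    -- norms of the increments
    have e1 : N (y - z) = l * n := by
      have hyz : y - z = (-l) • (x - y) := by
        funext i
        simp only [hz, Pi.sub_apply, Pi.add_apply, Pi.smul_apply, smul_eq_mul, Pi.neg_apply]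
        ring
      rw [hyz, hN3, abs_of_neg (by linarith : -l < 0)]
      ring
    have e2 : N (x - z) = (1 - l) * n := by
      have hxz : x - z = (1 - l) • (x - y) := by
        funext i
        simp only [hz, Pi.sub_apply, Pi.add_apply, Pi.smul_apply, smul_eq_mul]
        ring
      rw [hxz, hN3, abs_of_nonneg (by linarith : (0:ℝ) ≤ 1 - l)]
    -- gradient terms cancellation
    have e3 : (1 - l) * (∑ i, Dd z i * (y i - z i)) + l * (∑ i, Dd z i * (x i - z i)) = 0 := by
      rw [Finset.mul_sum, Finset.mul_sum, ← Finset.sum_add_distrib]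
      apply Finset.sum_eq_zero
      intro i _
      simp [hz]; ring
    -- linear term
    have e4 : ∑ i, s i * z i = (1 - l) * (∑ i, s i * y i) + l * (∑ i, s i * x i) := by
      rw [Finset.mul_sum, Finset.mul_sum, ← Finset.sum_add_distrib]
      apply Finset.sum_congr rfl
      intro i _
      simp [hz]; ring
    have hminz := hmin z hzX
    rw [e1] at h1
    rw [e2] at h2
    -- combine
    have h1' : (1 - l) * γ * d y ≥ (1 - l) * γ * (d z + (∑ i, Dd z i * (y i - z i))
        + (1/2) * (l * n)^2) := by
      apply mul_le_mul_of_nonneg_left h1 (by nlinarith)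
    have h2' : l * γ * d x ≥ l * γ * (d z + (∑ i, Dd z i * (x i - z i))
        + (1/2) * ((1 - l) * n)^2) := by
      apply mul_le_mul_of_nonneg_left h2 (by nlinarith)
    -- from minimality: γ d z ≥ l*(Sy - Sx) + γ d y
    have h5 : γ * d z ≥ l * ((∑ i, s i * y i) - (∑ i, s i * x i)) + γ * d y := by
      rw [e4] at hminz; linarith
    -- put together
    have expand1 : (1 - l) * γ * ((1:ℝ)/2 * (l * n)^2) = γ/2 * ((1-l) * l^2 * n^2) := by ring
    have expand2 : l * γ * ((1:ℝ)/2 * ((1-l) * n)^2) = γ/2 * (l * (1-l)^2 * n^2) := by ring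
    have hsum : (1 - l) * γ * d y + l * γ * d x ≥ γ * d z
        + γ * ((1 - l) * (∑ i, Dd z i * (y i - z i)) + l * (∑ i, Dd z i * (x i - z i)))
        + γ/2 * (l * (1 - l) * n^2) := by linarith [h1', h2']
    rw [e3] at hsum
    have hfin : l * γ * d x - l * γ * d y ≥
        l * ((∑ i, s i * y i) - (∑ i, s i * x i)) + γ/2 * (l * (1 - l) * n^2) := by
      linarith [hsum, h5]
    have hdiv : γ * d x - γ * d y ≥
        ((∑ i, s i * y i) - (∑ i, s i * x i)) + γ/2 * ((1 - l) * n^2) := by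
      have h' : l * (((∑ i, s i * y i) - (∑ i, s i * x i)) + γ/2 * ((1 - l) * n^2))
          ≤ l * (γ * d x - γ * d y) := by linarith [hfin]
      exact le_of_mul_le_mul_left h' hl0
    have : c - l * c = γ/2 * ((1-l) * n^2) := by rw [hc]; ring
    linarith [hdiv]
  -- take the limit l → 0
  by_contra hcon
  push_neg at hcon
  set ε : ℝ := ((∑ i, s i * y i) + γ * d y + c) - ((∑ i, s i * x i) + γ * d x) with hε
  have hε0 : 0 < ε := by simp [hε]; linarith
  rcases eq_or_lt_of_le hc0 with hceq | hcpos
  · have := key 1 one_pos le_rfl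
    rw [← hceq] at this
    simp at this
    rw [← hceq] at hcon
    simp at hcon
    linarith
  · set l : ℝ := min 1 (ε / (2 * c)) with hl
    have hl0 : 0 < l := lt_min one_pos (div_pos hε0 (by linarith))
    have hl1 : l ≤ 1 := min_le_left _ _
    have := key l hl0 hl1
    have hlc : l * c ≤ ε / 2 := by
      have h := min_le_right 1 (ε / (2 * c))
      calc l * c ≤ (ε / (2 * c)) * c := mul_le_mul_of_nonneg_right h hc0
        _ = ε / 2 := by field_simp
    linarith

end star

section dlb
variable {m : ℕ}

lemma dual_bound_neg {N : (Fin m → ℝ) → ℝ} (hN1 : ∀ v, 0 ≤ N v)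
    (hN2 : ∀ u v, N (u + v) ≤ N u + N v)
    (hN3 : ∀ (a : ℝ) (v), N (a • v) = |a| * N v)
    (hN4 : ∀ v, N v = 0 → v = 0) (w v : Fin m → ℝ) :
    -(dualNorm m N w * N v) ≤ ∑ i, w i * v i := by
  have h := dual_bound hN1 hN2 hN3 hN4 w (-v)
  have hs : ∑ i, w i * (-v) i = -∑ i, w i * v i := by
    rw [← Finset.sum_neg_distrib]
    apply Finset.sum_congr rfl
    intro i _
    simp
  rw [hs, myN_neg hN3] at h
  linarith

lemma d_lb (X : Set (Fin m → ℝ)) (hXconv : Convex ℝ X)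
    (h0X : (0 : Fin m → ℝ) ∈ X)
    (N : (Fin m → ℝ) → ℝ)
    (hN3 : ∀ (a : ℝ) (v), N (a • v) = |a| * N v)
    (d : (Fin m → ℝ) → ℝ) (Dd : (Fin m → ℝ) → (Fin m → ℝ))
    (hd0 : d 0 = 0) (hdnn : ∀ x ∈ X, 0 ≤ d x)
    (hdsc : ∀ x ∈ X, ∀ y ∈ X,
      d y ≥ d x + (∑ i, Dd x i * (y i - x i)) + (1 / 2 : ℝ) * (N (y - x)) ^ 2) :
    ∀ x ∈ X, (1 / 2 : ℝ) * (N x) ^ 2 ≤ d x := by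
  intro x hx
  have h := strong_opt X hXconv N hN3 d Dd hdsc (fun _ => 0) 1 one_pos 0 h0X
    (fun z hz => by simpa [hd0] using hdnn z hz) x hx
  simpa [hd0] using h

end dlb


/-- dual averaging regret bound: with `X` closed convex containing `0`,
`d` a prox-function (nonnegative, `d 0 = 0`, 1-strongly convex w.r.t. `N`), a
non-decreasing positive sequence `γ_t` (with the convention `γ₋₁ = γ₀`), arbitrary vectors
`g_k`, `ŷ₀ = 0` and `ŷ_{t+1} = argmin_{x ∈ X} { ⟨∑_{k=0}^t g_k, x⟩ + γ_t d(x) }`, we have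
`∑_{k=0}^t ⟨g_k, ŷ_k − x⟩ ≤ ½ ∑_{k=0}^t (1/γ_{k−1}) ‖g_k‖_*² + γ_t d(x)` for all `x ∈ X`. -/
theorem dual_averaging_regret_bound
    (m : ℕ) (X : Set (Fin m → ℝ)) (hXc : IsClosed X) (hXconv : Convex ℝ X)
    (h0X : (0 : Fin m → ℝ) ∈ X)
    (N : (Fin m → ℝ) → ℝ)
    (hN1 : ∀ v, 0 ≤ N v)
    (hN2 : ∀ u v, N (u + v) ≤ N u + N v)
    (hN3 : ∀ (a : ℝ) (v), N (a • v) = |a| * N v)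
    (hN4 : ∀ v, N v = 0 → v = 0)
    (d : (Fin m → ℝ) → ℝ) (Dd : (Fin m → ℝ) → (Fin m → ℝ))
    (hd0 : d 0 = 0) (hdnn : ∀ x ∈ X, 0 ≤ d x)
    (hdsc : ∀ x ∈ X, ∀ y ∈ X,
      d y ≥ d x + (∑ i, Dd x i * (y i - x i)) + (1 / 2 : ℝ) * (N (y - x)) ^ 2)
    (γ : ℕ → ℝ) (hγpos : ∀ t, 0 < γ t) (hγmono : Monotone γ)
    (g : ℕ → Fin m → ℝ)
    (yhat : ℕ → Fin m → ℝ) (hy0 : yhat 0 = 0)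
    (hymem : ∀ t, yhat (t + 1) ∈ X)
    (hymin : ∀ t, ∀ x ∈ X,
      (∑ i, (∑ k ∈ Finset.range (t + 1), g k) i * yhat (t + 1) i) + γ t * d (yhat (t + 1))
        ≤ (∑ i, (∑ k ∈ Finset.range (t + 1), g k) i * x i) + γ t * d x)
    (x : Fin m → ℝ) (hx : x ∈ X) (t : ℕ) :
    ∑ k ∈ Finset.range (t + 1), (∑ i, g k i * (yhat k i - x i))
      ≤ (1 / 2 : ℝ) * ∑ k ∈ Finset.range (t + 1),
          (1 / (if k = 0 then γ 0 else γ (k - 1))) * (dualNorm m N (g k)) ^ 2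
        + γ t * d x := by
  classical
  set S : ℕ → (Fin m → ℝ) := fun t => ∑ k ∈ Finset.range (t + 1), g k with hSdef
  set Δ : ℕ → ℝ := fun t => (∑ i, S t i * yhat (t + 1) i) + γ t * d (yhat (t + 1)) with hΔdef
  have hstar : ∀ t, ∀ z ∈ X,
      (∑ i, S t i * yhat (t + 1) i) + γ t * d (yhat (t + 1))
        + (γ t / 2) * (N (z - yhat (t + 1))) ^ 2
        ≤ (∑ i, S t i * z i) + γ t * d z :=
    fun t z hz => strong_opt X hXconv N hN3 d Dd hdsc (S t) (γ t) (hγpos t)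
      (yhat (t + 1)) (hymem t) (hymin t) z hz
  have hdlb := d_lb X hXconv h0X N hN3 d Dd hd0 hdnn hdsc
  have claim : ∀ t : ℕ,
      ∑ k ∈ Finset.range (t + 1), (∑ i, g k i * yhat k i)
        ≤ Δ t + (1 / 2 : ℝ) * ∑ k ∈ Finset.range (t + 1),
            (1 / (if k = 0 then γ 0 else γ (k - 1))) * (dualNorm m N (g k)) ^ 2 := by
    intro t
    induction t with
    | zero =>
        have hLHS : ∑ k ∈ Finset.range 1, (∑ i, g k i * yhat k i) = 0 := by
          rw [Finset.sum_range_one]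
          apply Finset.sum_eq_zero
          intro i _
          rw [hy0]
          simp
        rw [hLHS]
        set D : ℝ := dualNorm m N (g 0) with hD
        set r : ℝ := N (yhat 1) with hr
        have hS0 : S 0 = g 0 := by rw [hSdef]; simp
        have hinner : -(D * r) ≤ ∑ i, S 0 i * yhat 1 i := by
          rw [hS0]
          exact dual_bound_neg hN1 hN2 hN3 hN4 (g 0) (yhat 1)
        have hd1 : (1 / 2 : ℝ) * r ^ 2 ≤ d (yhat 1) := hdlb _ (hymem 0)
        have hsum1 : (1 / 2 : ℝ) * ∑ k ∈ Finset.range 1,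
            (1 / (if k = 0 then γ 0 else γ (k - 1))) * (dualNorm m N (g k)) ^ 2
            = 1 / (2 * γ 0) * D ^ 2 := by
          rw [Finset.sum_range_one]
          simp [hD]
          field_simp
        rw [hsum1]
        have hγ0 := hγpos 0
        have hΔ0 : Δ 0 = (∑ i, S 0 i * yhat 1 i) + γ 0 * d (yhat 1) := by rw [hΔdef]
        have key : 0 ≤ 2 * γ 0 * ((∑ i, S 0 i * yhat 1 i) + γ 0 * d (yhat 1)) + D ^ 2 := by
          have hp1 := mul_le_mul_of_nonneg_left hinner (by linarith : (0:ℝ) ≤ 2 * γ 0)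
          have hp2 := mul_le_mul_of_nonneg_left hd1
            (by positivity : (0:ℝ) ≤ 2 * γ 0 * γ 0)
          nlinarith [hp1, hp2, sq_nonneg (D - γ 0 * r)]
        have heq : Δ 0 + 1 / (2 * γ 0) * D ^ 2
            = (2 * γ 0 * ((∑ i, S 0 i * yhat 1 i) + γ 0 * d (yhat 1)) + D ^ 2) / (2 * γ 0) := by
          rw [hΔ0]
          field_simp
        rw [heq]
        exact div_nonneg key (by linarith)
    | succ t ih =>
        rw [Finset.sum_range_succ, Finset.sum_range_succ
          (f := fun k => (1 / (if k = 0 then γ 0 else γ (k - 1))) * (dualNorm m N (g k)) ^ 2)]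
        set D : ℝ := dualNorm m N (g (t + 1)) with hD
        set r : ℝ := N (yhat (t + 2) - yhat (t + 1)) with hr
        have hγt := hγpos t
        have hstar' := hstar t (yhat (t + 2)) (hymem (t + 1))
        have hsplit : ∑ i, S (t + 1) i * yhat (t + 2) i
            = (∑ i, S t i * yhat (t + 2) i) + ∑ i, g (t + 1) i * yhat (t + 2) i := by
          rw [← Finset.sum_add_distrib]
          apply Finset.sum_congr rfl
          intro i _
          rw [hSdef]
          simp [Finset.sum_apply, Finset.sum_range_succ]
          ring
        have hmono : γ t * d (yhat (t + 2)) ≤ γ (t + 1) * d (yhat (t + 2)) :=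
          mul_le_mul_of_nonneg_right (hγmono (Nat.le_succ t)) (hdnn _ (hymem (t + 1)))
        have hdual : (∑ i, g (t + 1) i * yhat (t + 1) i)
            - (∑ i, g (t + 1) i * yhat (t + 2) i) ≤ D * r := by
          have h := dual_bound hN1 hN2 hN3 hN4 (g (t + 1)) (yhat (t + 1) - yhat (t + 2))
          have hs : ∑ i, g (t + 1) i * (yhat (t + 1) - yhat (t + 2)) i
              = (∑ i, g (t + 1) i * yhat (t + 1) i)
                - (∑ i, g (t + 1) i * yhat (t + 2) i) := by
            rw [← Finset.sum_sub_distrib]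
            apply Finset.sum_congr rfl
            intro i _
            simp
            ring
          have hNeq : N (yhat (t + 1) - yhat (t + 2)) = r := by
            rw [hr, ← myN_neg hN3 (yhat (t + 2) - yhat (t + 1))]
            congr 1
            abel
          rw [hs, hNeq] at h
          exact h
        have hamgm : D * r ≤ (γ t / 2) * r ^ 2 + 1 / (2 * γ t) * D ^ 2 := by
          have heq : (γ t / 2) * r ^ 2 + 1 / (2 * γ t) * D ^ 2 - D * r
              = (γ t * r - D) ^ 2 / (2 * γ t) := by
            field_simp
            ring
          nlinarith [div_nonneg (sq_nonneg (γ t * r - D)) (by linarith : (0:ℝ) ≤ 2 * γ t), heq]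
        have hq : (1 / (if t + 1 = 0 then γ 0 else γ (t + 1 - 1))) * (dualNorm m N (g (t + 1))) ^ 2
            = 1 / γ t * D ^ 2 := by
          simp [hD]
        rw [hq]
        have hΔt : Δ t = (∑ i, S t i * yhat (t + 1) i) + γ t * d (yhat (t + 1)) := by rw [hΔdef]
        have hΔt1 : Δ (t + 1) = (∑ i, S (t + 1) i * yhat (t + 2) i)
            + γ (t + 1) * d (yhat (t + 2)) := by rw [hΔdef]
        have hkey : Δ t + (∑ i, g (t + 1) i * yhat (t + 1) i)
            ≤ Δ (t + 1) + 1 / (2 * γ t) * D ^ 2 := by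
          rw [hΔt, hΔt1, hsplit]
          linarith [hstar', hmono, hdual, hamgm]
        have hhalf : (1 / 2 : ℝ) * (1 / γ t * D ^ 2) = 1 / (2 * γ t) * D ^ 2 := by
          field_simp
        linarith [ih, hkey, hhalf.ge, hhalf.le]
  -- final assembly
  have hswap : ∑ k ∈ Finset.range (t + 1), (∑ i, g k i * (yhat k i - x i))
      = (∑ k ∈ Finset.range (t + 1), (∑ i, g k i * yhat k i)) - ∑ i, S t i * x i := by
    have h1 : ∀ k, ∑ i, g k i * (yhat k i - x i)
        = (∑ i, g k i * yhat k i) - ∑ i, g k i * x i := by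
      intro k
      rw [← Finset.sum_sub_distrib]
      apply Finset.sum_congr rfl
      intro i _
      ring
    rw [Finset.sum_congr rfl (fun k _ => h1 k), Finset.sum_sub_distrib]
    congr 1
    rw [Finset.sum_comm]
    apply Finset.sum_congr rfl
    intro i _
    rw [hSdef]
    simp [Finset.sum_apply, Finset.sum_mul]
  have hminx := hymin t x hx
  have hclaim := claim t
  rw [hswap]
  linarith [hclaim, hminx]
end

section
/- Disagreement bound for accumulated tracked gradients: Under the dynamic average consensus recursion s_{t+1} = P s_t + ∇_{t+1} − ∇_t with s_0 = ∇_0, where P is doubly stochastic with second singular value σ₂(P) < 1 and each row block ∇f_j(x_{j,l}) of ∇_l satisfies ‖∇f_j(x_{j,l})‖_* ≤ L, the accumulated deviation satisfies ‖∑_{l=0}^k s_{i,l} − ∑_{l=0}^k g_l‖_* ≤ √n L/(1 − σ₂(P)) + 2L for every agent i and every k ≥ 0, where g_l = (1/n)∑_{j=1}^n ∇f_j(x_{j,l}). -/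
namespace AGTDB

noncomputable def nrm {n : ℕ} (v : Fin n → ℝ) : ℝ := Real.sqrt (∑ i, v i ^ 2)

lemma nrm_nonneg {n : ℕ} (v : Fin n → ℝ) : 0 ≤ nrm v := Real.sqrt_nonneg _

lemma sq_nrm {n : ℕ} (v : Fin n → ℝ) : nrm v ^ 2 = ∑ i, v i ^ 2 :=
  Real.sq_sqrt (Finset.sum_nonneg fun i _ => sq_nonneg _)

lemma cs {n : ℕ} (f g : Fin n → ℝ) : ∑ i, f i * g i ≤ nrm f * nrm g := by
  have h1 : (∑ i, f i * g i) ≤ Real.sqrt ((∑ i, f i * g i)^2) := by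
    rw [Real.sqrt_sq_eq_abs]; exact le_abs_self _
  refine h1.trans ?_
  rw [nrm, nrm, ← Real.sqrt_mul (Finset.sum_nonneg fun i _ => sq_nonneg _)]
  exact Real.sqrt_le_sqrt (Finset.sum_mul_sq_le_sq_mul_sq _ _ _)

lemma l1_le {n : ℕ} (v : Fin n → ℝ) : ∑ j, |v j| ≤ Real.sqrt n * nrm v := by
  have h := cs (fun _ : Fin n => (1:ℝ)) (fun j => |v j|)
  simp only [one_mul] at h
  refine h.trans ?_
  have h1 : nrm (fun _ : Fin n => (1:ℝ)) = Real.sqrt n := by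
    simp [nrm]
  have h2 : nrm (fun j => |v j|) = nrm v := by
    simp [nrm, sq_abs]
  rw [h1, h2]

lemma contract_transpose {n : ℕ} (M : Matrix (Fin n) (Fin n) ℝ) (σ2 : ℝ) (hσnn : 0 ≤ σ2)
    (h : ∀ y, nrm (M.mulVec y) ≤ σ2 * nrm y) (x : Fin n → ℝ) :
    nrm (M.transpose.mulVec x) ≤ σ2 * nrm x := by
  have bilin : ∀ z : Fin n → ℝ, ∑ i, (M.transpose.mulVec x) i * z i
      = ∑ j, x j * (M.mulVec z) j := by
    intro z
    simp only [Matrix.mulVec, dotProduct, Matrix.transpose_apply,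
      Finset.sum_mul, Finset.mul_sum]
    rw [Finset.sum_comm]
    congr 1; ext j; congr 1; ext i; ring
  set y := M.transpose.mulVec x with hy
  have key : ∑ i, y i ^ 2 = ∑ j, x j * (M.mulVec y) j := by
    rw [← bilin y]
    congr 1; ext i; ring
  have h2 : nrm y ^ 2 ≤ nrm x * (σ2 * nrm y) := by
    rw [sq_nrm, key]
    exact (cs x (M.mulVec y)).trans (by
      exact mul_le_mul_of_nonneg_left (h y) (nrm_nonneg x))
  nlinarith [nrm_nonneg y, nrm_nonneg x, mul_nonneg hσnn (nrm_nonneg x)]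

lemma contract_pow {n : ℕ} (M : Matrix (Fin n) (Fin n) ℝ) (σ2 : ℝ) (hσnn : 0 ≤ σ2)
    (h : ∀ y, nrm (M.mulVec y) ≤ σ2 * nrm y) (t : ℕ) (x : Fin n → ℝ) :
    nrm ((M ^ t).mulVec x) ≤ σ2 ^ t * nrm x := by
  induction t generalizing x with
  | zero => simp [Matrix.one_mulVec]
  | succ t ih =>
    rw [pow_succ, ← Matrix.mulVec_mulVec]
    calc nrm ((M^t).mulVec (M.mulVec x)) ≤ σ2^t * nrm (M.mulVec x) := ih _
    _ ≤ σ2^t * (σ2 * nrm x) := mul_le_mul_of_nonneg_left (h x) (pow_nonneg hσnn t)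
    _ = σ2^(t+1) * nrm x := by ring

lemma row_l1 {n : ℕ} (M : Matrix (Fin n) (Fin n) ℝ) (σ2 : ℝ) (hσnn : 0 ≤ σ2)
    (h : ∀ y, nrm (M.mulVec y) ≤ σ2 * nrm y) (t : ℕ) (i : Fin n) :
    ∑ j, |(M ^ t) i j| ≤ Real.sqrt n * σ2 ^ t := by
  classical
  have hv : ∀ j, (M^t) i j = ((M.transpose ^ t).mulVec (Pi.single i 1)) j := by
    intro j
    rw [← Matrix.transpose_pow]
    simp [Matrix.mulVec, dotProduct, Matrix.transpose_apply, Pi.single_apply,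
      mul_ite, Finset.sum_ite_eq']
  have h1 : nrm (Pi.single i (1:ℝ) : Fin n → ℝ) = 1 := by
    simp [nrm, Pi.single_apply, ite_pow]
  have h2 := contract_pow M.transpose σ2 hσnn (contract_transpose M σ2 hσnn h) t (Pi.single i 1)
  rw [h1, mul_one] at h2
  calc ∑ j, |(M^t) i j| = ∑ j, |((M.transpose ^ t).mulVec (Pi.single i 1)) j| := by
        simp only [hv]
    _ ≤ Real.sqrt n * nrm ((M.transpose ^ t).mulVec (Pi.single i 1)) := l1_le _
    _ ≤ Real.sqrt n * σ2 ^ t := mul_le_mul_of_nonneg_left h2 (Real.sqrt_nonneg _)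

lemma contractM {n : ℕ} (hn : 0 < n) (P : Matrix (Fin n) (Fin n) ℝ)
    (hrow : ∀ i, ∑ j, P i j = 1) (σ2 : ℝ)
    (hσ : ∀ v : Fin n → ℝ, (∑ i, v i) = 0 → nrm (P.mulVec v) ≤ σ2 * nrm v)
    (hσnn : 0 ≤ σ2) (x : Fin n → ℝ) :
    nrm ((P - Matrix.of fun _ _ => (n:ℝ)⁻¹).mulVec x) ≤ σ2 * nrm x := by
  have hn' : (n:ℝ) ≠ 0 := Nat.cast_ne_zero.mpr hn.ne'
  set a := (n:ℝ)⁻¹ * ∑ j, x j with ha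
  set w := fun j => x j - a with hw
  have hsum : ∑ j, x j = n * a := by rw [ha]; field_simp
  have hsumw : ∑ j, w j = 0 := by
    simp only [hw, Finset.sum_sub_distrib, Finset.sum_const, Finset.card_fin, nsmul_eq_mul]
    rw [hsum]; ring
  have heq : (P - Matrix.of fun _ _ => (n:ℝ)⁻¹).mulVec x = P.mulVec w := by
    ext i
    simp only [Matrix.mulVec, dotProduct, Matrix.sub_apply, Matrix.of_apply, hw,
      sub_mul, mul_sub, Finset.sum_sub_distrib]
    congr 1
    · rw [← Finset.mul_sum, ← Finset.sum_mul, hrow i, one_mul, ha]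
  have hwle : nrm w ≤ nrm x := by
    apply Real.sqrt_le_sqrt
    have e1 : ∀ j : Fin n, w j ^ 2 = x j ^ 2 - 2*a*x j + a^2 := fun j => by rw [hw]; ring
    rw [Finset.sum_congr rfl fun j _ => e1 j]
    simp only [Finset.sum_add_distrib, Finset.sum_sub_distrib, Finset.sum_const,
      Finset.card_fin, nsmul_eq_mul, ← Finset.mul_sum]
    rw [hsum]
    nlinarith [sq_nonneg a, (by exact_mod_cast hn : (0:ℝ) < n)]
  rw [heq]
  exact (hσ w hsumw).trans (mul_le_mul_of_nonneg_left hwle hσnn)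

lemma colsum_pow {n : ℕ} (P : Matrix (Fin n) (Fin n) ℝ)
    (hcol : ∀ j, ∑ i, P i j = 1) (t : ℕ) : ∀ j, ∑ i, (P^t) i j = 1 := by
  induction t with
  | zero => intro j; simp [Matrix.one_apply]
  | succ t ih =>
    intro j
    rw [pow_succ]
    simp only [Matrix.mul_apply]
    rw [Finset.sum_comm]
    calc ∑ k, ∑ i, (P^t) i k * P k j = ∑ k, (∑ i, (P^t) i k) * P k j := by
          simp [Finset.sum_mul]
      _ = ∑ k, P k j := by simp only [ih, one_mul]
      _ = 1 := hcol j

lemma pow_sub_J {n : ℕ} (hn : 0 < n) (P : Matrix (Fin n) (Fin n) ℝ)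
    (hrow : ∀ i, ∑ j, P i j = 1) (hcol : ∀ j, ∑ i, P i j = 1) (t : ℕ) :
    (P - Matrix.of fun _ _ => (n:ℝ)⁻¹)^(t+1) = P^(t+1) - Matrix.of fun _ _ => (n:ℝ)⁻¹ := by
  have hn' : (n:ℝ) ≠ 0 := Nat.cast_ne_zero.mpr hn.ne'
  set J : Matrix (Fin n) (Fin n) ℝ := Matrix.of fun _ _ => (n:ℝ)⁻¹ with hJ
  have hPJ : P * J = J := by
    ext i j
    simp only [Matrix.mul_apply, hJ, Matrix.of_apply]
    rw [← Finset.sum_mul, hrow i, one_mul]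
  have hJQ : ∀ (Q : Matrix (Fin n) (Fin n) ℝ), (∀ j, ∑ i, Q i j = 1) → J * Q = J := by
    intro Q hQ
    ext i j
    simp only [Matrix.mul_apply, hJ, Matrix.of_apply]
    rw [← Finset.mul_sum, hQ j, mul_one]
  have hJJ : J * J = J := by
    ext i j
    simp only [Matrix.mul_apply, hJ, Matrix.of_apply, Finset.sum_const, Finset.card_fin,
      nsmul_eq_mul]
    field_simp
  induction t with
  | zero => simp
  | succ t ih =>
    rw [pow_succ' (P - J) (t+1), ih, Matrix.mul_sub, Matrix.sub_mul, Matrix.sub_mul,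
      hPJ, hJJ, hJQ (P^(t+1)) (colsum_pow P hcol (t+1)), ← pow_succ']
    abel

lemma geom_le {σ2 : ℝ} (h0 : 0 ≤ σ2) (h1 : σ2 < 1) (k : ℕ) :
    ∑ t ∈ Finset.range k, σ2^t ≤ 1/(1-σ2) := by
  have hpos : 0 < 1 - σ2 := by linarith
  rw [le_div_iff₀ hpos]
  nlinarith [geom_sum_mul σ2 k, pow_nonneg h0 k]

end AGTDB

/-- disagreement bound for accumulated tracked gradients: under the dynamic
average consensus recursion `s_{i,t+1} = ∑ⱼ p_{ij} s_{j,t} + ∇f_i(x_{i,t+1}) − ∇f_i(x_{i,t})`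
with `s_{i,0} = ∇f_i(x_{i,0})`, `P` doubly stochastic with second singular value `σ₂ < 1`
(characterized by contraction on vectors orthogonal to `𝟏`), and all subgradients bounded
by `L` in a dual norm `Nd`, we have
`‖∑_{l=0}^k s_{i,l} − ∑_{l=0}^k g_l‖_* ≤ √n L/(1 − σ₂) + 2L` where
`g_l = (1/n) ∑ⱼ ∇f_j(x_{j,l})`. -/
theorem accumulated_gradient_tracking_disagreement_bound
    (n m : ℕ) (hn : 0 < n)
    (P : Matrix (Fin n) (Fin n) ℝ)
    (hpos : ∀ i j, 0 ≤ P i j)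
    (hrow : ∀ i, ∑ j, P i j = 1) (hcol : ∀ j, ∑ i, P i j = 1)
    (σ2 : ℝ) (hσnn : 0 ≤ σ2) (hσlt : σ2 < 1)
    (hσ : ∀ v : Fin n → ℝ, (∑ i, v i) = 0 →
      Real.sqrt (∑ i, (P.mulVec v i) ^ 2) ≤ σ2 * Real.sqrt (∑ i, (v i) ^ 2))
    (Nd : (Fin m → ℝ) → ℝ)
    (hNd1 : ∀ v, 0 ≤ Nd v)
    (hNd2 : ∀ u v, Nd (u + v) ≤ Nd u + Nd v)
    (hNd3 : ∀ (a : ℝ) (v), Nd (a • v) = |a| * Nd v)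
    (L : ℝ) (hL : 0 < L)
    (gr : ℕ → Fin n → Fin m → ℝ) (hgrB : ∀ t j, Nd (gr t j) ≤ L)
    (s : ℕ → Fin n → Fin m → ℝ)
    (hs0 : ∀ i, s 0 i = gr 0 i)
    (hsrec : ∀ t i, s (t + 1) i = (∑ j, P i j • s t j) + gr (t + 1) i - gr t i)
    (i : Fin n) (k : ℕ) :
    Nd ((∑ l ∈ Finset.range (k + 1), s l i)
        - ∑ l ∈ Finset.range (k + 1), (n : ℝ)⁻¹ • ∑ j, gr l j)
      ≤ Real.sqrt n * L / (1 - σ2) + 2 * L := by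
  classical
  have hn' : (n:ℝ) ≠ 0 := Nat.cast_ne_zero.mpr hn.ne'
  set J : Matrix (Fin n) (Fin n) ℝ := Matrix.of fun _ _ => (n:ℝ)⁻¹ with hJdef
  set M : Matrix (Fin n) (Fin n) ℝ := P - J with hMdef
  -- contraction of M
  have hσ' : ∀ v : Fin n → ℝ, (∑ i, v i) = 0 →
      AGTDB.nrm (P.mulVec v) ≤ σ2 * AGTDB.nrm v := fun v hv => by
    simpa [AGTDB.nrm] using hσ v hv
  have hMc : ∀ x, AGTDB.nrm (M.mulVec x) ≤ σ2 * AGTDB.nrm x :=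
    fun x => AGTDB.contractM hn P hrow σ2 hσ' hσnn x
  have hrowl1 : ∀ t, ∑ j, |(M^t) i j| ≤ Real.sqrt n * σ2 ^ t :=
    fun t => AGTDB.row_l1 M σ2 hσnn hMc t i
  have hpowJ : ∀ t, M^(t+1) = P^(t+1) - J :=
    fun t => AGTDB.pow_sub_J hn P hrow hcol t
  -- accumulated recursion
  have claim1 : ∀ k i, (∑ l ∈ Finset.range (k+2), s l i)
      = (∑ j, P i j • (∑ l ∈ Finset.range (k+1), s l j)) + gr (k+1) i := by
    intro k
    induction k with
    | zero =>
      intro i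
      norm_num
      have h := hsrec 0 i
      norm_num at h
      rw [Finset.sum_range_succ, Finset.sum_range_one, h]
      simp only [Finset.sum_range_one, hs0]
      abel
    | succ k ih =>
      intro i
      rw [Finset.sum_range_succ, ih i, hsrec (k+1) i]
      simp only [Finset.sum_range_succ, smul_add, Finset.sum_add_distrib]
      abel
  -- closed form
  have claim2 : ∀ k i, (∑ l ∈ Finset.range (k+1), s l i)
      = ∑ l ∈ Finset.range (k+1), ∑ j, (P^(k-l)) i j • gr l j := by
    intro k
    induction k with
    | zero =>
      intro i
      simp [Finset.sum_range_one, hs0 i, Matrix.one_apply, ite_smul]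
    | succ k ih =>
      intro i
      rw [claim1 k i]
      have step : (∑ j, P i j • (∑ l ∈ Finset.range (k+1), s l j))
          = ∑ l ∈ Finset.range (k+1), ∑ j', (P^(k+1-l)) i j' • gr l j' := by
        calc ∑ j, P i j • (∑ l ∈ Finset.range (k+1), s l j)
            = ∑ j, ∑ l ∈ Finset.range (k+1), ∑ j', (P i j * (P^(k-l)) j j') • gr l j' := by
              simp only [ih, Finset.smul_sum, smul_smul]
          _ = ∑ l ∈ Finset.range (k+1), ∑ j, ∑ j', (P i j * (P^(k-l)) j j') • gr l j' :=
              Finset.sum_comm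
          _ = ∑ l ∈ Finset.range (k+1), ∑ j', ∑ j, (P i j * (P^(k-l)) j j') • gr l j' :=
              Finset.sum_congr rfl fun l _ => Finset.sum_comm
          _ = ∑ l ∈ Finset.range (k+1), ∑ j', (∑ j, P i j * (P^(k-l)) j j') • gr l j' :=
              Finset.sum_congr rfl fun l _ => Finset.sum_congr rfl fun j' _ =>
                (Finset.sum_smul).symm
          _ = ∑ l ∈ Finset.range (k+1), ∑ j', (P^(k+1-l)) i j' • gr l j' := by
              refine Finset.sum_congr rfl fun l hl => Finset.sum_congr rfl fun j' _ => ?_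
              have hl' : l ≤ k := Nat.lt_succ_iff.mp (Finset.mem_range.mp hl)
              rw [← Matrix.mul_apply, ← pow_succ', Nat.succ_sub hl']
      rw [step,
        Finset.sum_range_succ (fun l => ∑ j', (P^(k+1-l)) i j' • gr l j') (k+1)]
      congr 1
      simp [Nat.sub_self, Matrix.one_apply, ite_smul]
  -- difference identity
  have hdiff : (∑ l ∈ Finset.range (k+1), s l i)
        - ∑ l ∈ Finset.range (k+1), (n : ℝ)⁻¹ • ∑ j, gr l j
      = ∑ l ∈ Finset.range (k+1), ∑ j, ((P^(k-l)) i j - (n:ℝ)⁻¹) • gr l j := by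
    rw [claim2 k i, ← Finset.sum_sub_distrib]
    refine Finset.sum_congr rfl fun l _ => ?_
    rw [Finset.smul_sum, ← Finset.sum_sub_distrib]
    exact Finset.sum_congr rfl fun j _ => (sub_smul _ _ _).symm
  -- seminorm machinery
  have hNd0 : Nd 0 = 0 := by
    have := hNd3 0 0
    simpa using this
  have hsub : ∀ {ι : Type} (t : Finset ι) (f : ι → Fin m → ℝ),
      Nd (∑ x ∈ t, f x) ≤ ∑ x ∈ t, Nd (f x) :=
    fun t f => Finset.le_sum_of_subadditive Nd hNd0.le hNd2 t f
  set R : ℕ → ℝ := fun t => ∑ j, |(P^t) i j - (n:ℝ)⁻¹| with hRdef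
  have hbound : Nd ((∑ l ∈ Finset.range (k+1), s l i)
        - ∑ l ∈ Finset.range (k+1), (n : ℝ)⁻¹ • ∑ j, gr l j)
      ≤ ∑ l ∈ Finset.range (k+1), R (k-l) * L := by
    rw [hdiff]
    refine (hsub _ _).trans ?_
    refine Finset.sum_le_sum fun l _ => ?_
    refine (hsub _ _).trans ?_
    rw [hRdef]
    simp only
    rw [Finset.sum_mul]
    refine Finset.sum_le_sum fun j _ => ?_
    rw [hNd3]
    exact mul_le_mul_of_nonneg_left (hgrB l j) (abs_nonneg _)
  have hreflect : ∑ l ∈ Finset.range (k+1), R (k-l) * L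
      = ∑ t ∈ Finset.range (k+1), R t * L := by
    rw [← Finset.sum_range_reflect (fun t => R t * L) (k+1)]
    exact Finset.sum_congr rfl fun l _ => by norm_num
  -- bounds on R
  have hR0 : R 0 ≤ 2 := by
    have hterm : ∀ j : Fin n, |(P^0 : Matrix (Fin n) (Fin n) ℝ) i j - (n:ℝ)⁻¹|
        ≤ (if i = j then (1:ℝ) else 0) + (n:ℝ)⁻¹ := by
      intro j
      rw [pow_zero, Matrix.one_apply]
      refine (abs_sub _ _).trans ?_
      have h1 : |if i = j then (1:ℝ) else 0| = if i = j then (1:ℝ) else 0 := by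
        split <;> simp
      have h2 : |(n:ℝ)⁻¹| = (n:ℝ)⁻¹ := abs_of_nonneg (by positivity)
      rw [h1, h2]
    calc R 0 ≤ ∑ j, ((if i = j then (1:ℝ) else 0) + (n:ℝ)⁻¹) :=
          Finset.sum_le_sum fun j _ => hterm j
      _ = 1 + n * (n:ℝ)⁻¹ := by
          rw [Finset.sum_add_distrib]
          simp [Finset.sum_ite_eq, Finset.sum_const, Finset.card_fin]
      _ ≤ 2 := by rw [mul_inv_cancel₀ hn']; norm_num
  have hRt : ∀ t, R (t+1) ≤ Real.sqrt n * σ2^(t+1) := by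
    intro t
    have he : ∀ j, (P^(t+1)) i j - (n:ℝ)⁻¹ = (M^(t+1)) i j := by
      intro j
      rw [hpowJ t]
      simp [Matrix.sub_apply, hJdef]
    rw [hRdef]
    simp only [he]
    exact hrowl1 (t+1)
  -- geometric sum
  have hgeo : ∑ t ∈ Finset.range k, σ2^(t+1) ≤ 1/(1-σ2) := by
    have h1 : ∑ t ∈ Finset.range k, σ2^(t+1) ≤ ∑ t ∈ Finset.range (k+1), σ2^t := by
      rw [Finset.sum_range_succ']
      simp only [pow_zero]
      linarith
    exact h1.trans (AGTDB.geom_le hσnn hσlt (k+1))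
  have hsqn : (0:ℝ) ≤ Real.sqrt n := Real.sqrt_nonneg _
  -- final assembly
  have hfinal : ∑ t ∈ Finset.range (k+1), R t * L
      ≤ Real.sqrt n * L / (1 - σ2) + 2 * L := by
    rw [Finset.sum_range_succ']
    have hA : ∑ t ∈ Finset.range k, R (t+1) * L ≤ Real.sqrt n * L / (1 - σ2) := by
      calc ∑ t ∈ Finset.range k, R (t+1) * L
          ≤ ∑ t ∈ Finset.range k, (Real.sqrt n * σ2^(t+1)) * L :=
            Finset.sum_le_sum fun t _ =>
              mul_le_mul_of_nonneg_right (hRt t) hL.le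
        _ = (Real.sqrt n * L) * ∑ t ∈ Finset.range k, σ2^(t+1) := by
            rw [Finset.mul_sum]
            exact Finset.sum_congr rfl fun t _ => by ring
        _ ≤ (Real.sqrt n * L) * (1/(1-σ2)) :=
            mul_le_mul_of_nonneg_left hgeo (by positivity)
        _ = Real.sqrt n * L / (1 - σ2) := by ring
    have hB : R 0 * L ≤ 2 * L := mul_le_mul_of_nonneg_right hR0 hL.le
    linarith
  calc Nd ((∑ l ∈ Finset.range (k+1), s l i)
        - ∑ l ∈ Finset.range (k+1), (n : ℝ)⁻¹ • ∑ j, gr l j)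
      ≤ ∑ l ∈ Finset.range (k+1), R (k-l) * L := hbound
    _ = ∑ t ∈ Finset.range (k+1), R t * L := hreflect
    _ ≤ Real.sqrt n * L / (1 - σ2) + 2 * L := hfinal
end
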